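/- Let Y be a fractional allocation whose consumption graph is acyclic and in which every split object is split only among agents who all value it positively or all value it negatively. Then the rounding algorithm (iteratively removing a leaf of the forest: if the leaf is an object, assign it fully to its unique neighbor; if the leaf is an agent i with neighbor o, give i's share of o to some other neighbor k with u_{ko} > 0 if one exists, otherwise assign o entirely to i) terminates and outputs a discrete allocation Z with u_i(Z) ≥ u_i(Y) − max_o |u_{io}| for every agent i. -/

import Mathlib

/-- `X` is a fractional allocation: nonnegative entries, each object fully allocated. -/
def IsAlloc (n m : ℕ) (X : Fin n → Fin m → ℝ) : Prop :=
  (∀ i o, 0 ≤ X i o) ∧ ∀ o, ∑ i, X i o = 1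

/-- Agent `i`'s additive utility under allocation `X` with utility matrix `U`. -/
def util {n m : ℕ} (U X : Fin n → Fin m → ℝ) (i : Fin n) : ℝ :=
  ∑ o, U i o * X i o

/-- `X` is fractionally Pareto-optimal: no allocation weakly dominates it with one strict gain. -/
def IsFPO (n m : ℕ) (U X : Fin n → Fin m → ℝ) : Prop :=
  ¬ ∃ Y, IsAlloc n m Y ∧ (∀ i, util U X i ≤ util U Y i) ∧ ∃ i, util U X i < util U Y i

/-- The consumption graph of allocation `X`: bipartite on agents ⊕ objects,
with an edge between agent `i` and object `o` iff `X i o > 0`. -/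
def consGraph {n m : ℕ} (X : Fin n → Fin m → ℝ) : SimpleGraph (Fin n ⊕ Fin m) where
  Adj v w :=
    (∃ i o, v = Sum.inl i ∧ w = Sum.inr o ∧ 0 < X i o) ∨
    (∃ i o, v = Sum.inr o ∧ w = Sum.inl i ∧ 0 < X i o)
  symm := by
    constructor
    rintro v w (⟨i, o, rfl, rfl, h⟩ | ⟨i, o, rfl, rfl, h⟩)
    · exact Or.inr ⟨i, o, rfl, rfl, h⟩
    · exact Or.inl ⟨i, o, rfl, rfl, h⟩
  loopless := by
    constructor
    rintro v (⟨i, o, rfl, h, _⟩ | ⟨i, o, rfl, h, _⟩) <;> simp_all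



open SimpleGraph

lemma exists_parent_fn {V : Type*} (G : SimpleGraph V) (hac : G.IsAcyclic) :
    ∃ par : V → Option V, (∀ v w, par v = some w → G.Adj v w) ∧
      (∀ v w, G.Adj v w → par v = some w ∨ par w = some v) := by
  classical
  set root : V → V := fun v => Quot.out (G.connectedComponentMk v) with hroot_def
  have hreach : ∀ v, G.Reachable v (root v) := by
    intro v
    have h : G.connectedComponentMk (root v) = G.connectedComponentMk v := Quot.out_eq _
    exact (ConnectedComponent.eq.mp h).symm
  have pathTo : ∀ v, G.Path v (root v) := fun v => ((hreach v).some).toPath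
  set par : V → Option V :=
    fun v => if v = root v then none else some (((pathTo v) : G.Walk v (root v)).getVert 1)
    with hpar_def
  have huniq := isAcyclic_iff_path_unique.mp hac
  refine ⟨par, ?_, ?_⟩
  · intro v w h
    simp only [hpar_def] at h
    split_ifs at h with hv
    obtain rfl : w = ((pathTo v) : G.Walk v (root v)).getVert 1 := (Option.some.inj h).symm
    have hlen : 0 < ((pathTo v) : G.Walk v (root v)).length := by
      rcases Nat.eq_zero_or_pos ((pathTo v) : G.Walk v (root v)).length with h1 | h1
      · exact absurd (Walk.eq_of_length_eq_zero h1) hv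
      · exact h1
    have := ((pathTo v) : G.Walk v (root v)).adj_getVert_succ hlen
    simpa using this
  · intro v w hadj
    have hroots : root w = root v := by
      simp only [hroot_def]
      rw [ConnectedComponent.sound hadj.symm.reachable]
    by_cases hv : v = root v
    · -- w points to v
      right
      have hwr : w ≠ root w := by rw [hroots, ← hv]; exact hadj.ne'
      have heq := huniq (pathTo w)
        ⟨(Walk.cons hadj.symm Walk.nil).copy rfl (by rw [hroots, ← hv]), by simp [hadj.ne']⟩
      have hgv : ((pathTo w) : G.Walk w (root w)).getVert 1 = v := by
        have h2 := congrArg (fun q : G.Path w (root w) => (q : G.Walk w (root w)).getVert 1) heq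
        simpa using h2
      simp [hpar_def, hwr, hgv]
    · by_cases hw : w ∈ ((pathTo v) : G.Walk v (root v)).support
      · left
        set p : G.Walk v (root v) := (pathTo v : G.Walk v (root v)) with hp_def
        have ht : (p.takeUntil w hw).IsPath := ((pathTo v).isPath).takeUntil hw
        have hsingle : (Walk.cons hadj Walk.nil : G.Walk v w).IsPath := by simp [hadj.ne]
        have heq := huniq ⟨p.takeUntil w hw, ht⟩ ⟨Walk.cons hadj Walk.nil, hsingle⟩
        have heq' : p.takeUntil w hw = Walk.cons hadj Walk.nil := congrArg Subtype.val heq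
        have hgv : p.getVert 1 = w := by
          conv_lhs => rw [← p.take_spec hw, heq']
          simp
        simp [hpar_def, hv, ← hp_def, hgv]
      · right
        have hwr : w ≠ root w := by
          rw [hroots]
          intro h
          apply hw
          rw [h]
          exact Walk.end_mem_support _
        have hWp : ((Walk.cons hadj.symm (pathTo v : G.Walk v (root v))).copy rfl
            hroots.symm).IsPath := by
          rw [Walk.isPath_copy]
          exact Walk.IsPath.cons (pathTo v).isPath hw
        have heq := huniq (pathTo w) ⟨_, hWp⟩
        have hgv : ((pathTo w) : G.Walk w (root w)).getVert 1 = v := by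
          have h2 := congrArg (fun q : G.Path w (root w) => (q : G.Walk w (root w)).getVert 1) heq
          simpa using h2
        simp [hpar_def, hwr, hgv]


/-- Rounding: given a fractional allocation with acyclic consumption graph, in which every
split object is valued all-positively or all-negatively by its holders, there is a discrete
allocation in which each agent loses at most the absolute value of one object. -/
theorem rounding_exists (n m : ℕ) (U Y : Fin n → Fin m → ℝ)
    (hY : IsAlloc n m Y)
    (hac : (consGraph Y).IsAcyclic)
    (hsign : ∀ o : Fin m, (∃ i j, i ≠ j ∧ 0 < Y i o ∧ 0 < Y j o) →
      (∀ i, 0 < Y i o → 0 < U i o) ∨ (∀ i, 0 < Y i o → U i o < 0)) :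
    ∃ Z : Fin n → Fin m → ℝ, IsAlloc n m Z ∧ (∀ i o, Z i o = 0 ∨ Z i o = 1) ∧
      ∀ i, util U Y i - (⨆ o, |U i o|) ≤ util U Z i := by
  classical
  obtain ⟨par, hparAdj, hparOr⟩ := exists_parent_fn (consGraph Y) hac
  have hadj_iff : ∀ i o, (consGraph Y).Adj (Sum.inl i) (Sum.inr o) ↔ 0 < Y i o := by
    intro i o
    constructor
    · rintro (⟨i', o', h1, h2, h3⟩ | ⟨i', o', h1, h2, h3⟩) <;> simp_all
    · intro h
      exact Or.inl ⟨i, o, rfl, rfl, h⟩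
  have horient : ∀ i o, 0 < Y i o →
      par (Sum.inl i) = some (Sum.inr o) ∨ par (Sum.inr o) = some (Sum.inl i) :=
    fun i o h => hparOr _ _ ((hadj_iff i o).mpr h)
  have hYle1 : ∀ i o, Y i o ≤ 1 := by
    intro i o
    calc Y i o ≤ ∑ j, Y j o :=
          Finset.single_le_sum (fun j _ => hY.1 j o) (Finset.mem_univ i)
      _ = 1 := hY.2 o
  have hex : ∀ o, ∃ i, 0 < Y i o := by
    intro o
    by_contra h
    push_neg at h
    have : ∑ i, Y i o = 0 :=
      Finset.sum_eq_zero fun i _ => le_antisymm (h i) (hY.1 i o)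
    rw [hY.2 o] at this
    norm_num at this
  set splitP : Fin m → Prop := fun o => ∃ i j, i ≠ j ∧ 0 < Y i o ∧ 0 < Y j o with hsplit_def
  set negc : Fin m → Prop := fun o => splitP o ∧ ∀ i, 0 < Y i o → U i o < 0 with hnegc_def
  have hfull : ∀ o i, 0 < Y i o → ¬ splitP o → Y i o = 1 := by
    intro o i hi hs
    have hz : ∀ j ∈ Finset.univ, j ≠ i → Y j o = 0 := by
      intro j _ hj
      by_contra h
      exact hs ⟨j, i, hj, lt_of_le_of_ne (hY.1 j o) (Ne.symm h), hi⟩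
    have := hY.2 o
    rwa [Finset.sum_eq_single i hz (fun h => absurd (Finset.mem_univ i) h)] at this
  have hchild : ∀ o, splitP o → ∃ j, 0 < Y j o ∧ par (Sum.inl j) = some (Sum.inr o) := by
    rintro o ⟨i, j, hij, hi, hj⟩
    rcases horient i o hi with h1 | h1
    · exact ⟨i, hi, h1⟩
    · rcases horient j o hj with h2 | h2
      · exact ⟨j, hj, h2⟩
      · rw [h1] at h2
        simp only [Option.some.injEq, Sum.inl.injEq] at h2
        exact absurd h2 hij
  have hP : ∀ o, ∃ k, 0 < Y k o ∧ (negc o → par (Sum.inl k) = some (Sum.inr o)) ∧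
      (¬ negc o → ∀ i, 0 < Y i o → i ≠ k → par (Sum.inl i) = some (Sum.inr o)) := by
    intro o
    by_cases hneg : negc o
    · obtain ⟨j, hj1, hj2⟩ := hchild o hneg.1
      exact ⟨j, hj1, fun _ => hj2, fun h => absurd hneg h⟩
    · rcases hpo : par (Sum.inr o) with _ | v
      · obtain ⟨k, hk⟩ := hex o
        refine ⟨k, hk, fun h => absurd h hneg, fun _ i hi _ => ?_⟩
        rcases horient i o hi with h1 | h1
        · exact h1
        · rw [hpo] at h1; exact absurd h1 (by simp)
      · have hadj := hparAdj _ _ hpo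
        rcases hadj with ⟨i', o', h1, h2, h3⟩ | ⟨i', o', h1, rfl, h3⟩
        · exact absurd h1 (by simp)
        · obtain rfl : o = o' := Sum.inr.inj h1
          refine ⟨i', h3, fun h => absurd h hneg, fun _ i hi hik => ?_⟩
          rcases horient i o hi with hcase | hcase
          · exact hcase
          · rw [hpo] at hcase
            simp only [Option.some.injEq, Sum.inl.injEq] at hcase
            exact absurd hcase.symm hik
  choose a ha1 ha2 ha3 using hP
  set Z : Fin n → Fin m → ℝ := fun i o => if a o = i then 1 else 0 with hZ_def
  have hZ01 : ∀ i o, Z i o = 0 ∨ Z i o = 1 := by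
    intro i o
    by_cases h : a o = i <;> simp [hZ_def, h]
  refine ⟨Z, ⟨?_, ?_⟩, hZ01, ?_⟩
  · intro i o
    by_cases h : a o = i <;> simp [hZ_def, h]
  · intro o
    simp [hZ_def]
  · intro i
    have hsupnn : 0 ≤ ⨆ o, |U i o| := Real.iSup_nonneg fun o => abs_nonneg _
    have habs : ∀ o, |U i o| ≤ ⨆ o', |U i o'| :=
      fun o => le_ciSup (f := fun o' => |U i o'|) (Set.Finite.bddAbove (Set.finite_range _)) o
    set t : Fin m → ℝ := fun o => U i o * (Z i o - Y i o) with ht_def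
    have hsum : util U Z i - util U Y i = ∑ o, t o := by
      rw [util, util, ← Finset.sum_sub_distrib]
      exact Finset.sum_congr rfl fun o _ => by ring
    have claim0 : ∀ o, par (Sum.inl i) ≠ some (Sum.inr o) → 0 ≤ t o := by
      intro o hne
      by_cases hai : a o = i
      · have hYpos : 0 < Y i o := hai ▸ ha1 o
        have hZ1 : Z i o = 1 := by simp [hZ_def, hai]
        by_cases hneg : negc o
        · exact absurd (hai ▸ ha2 o hneg) hne
        · by_cases hs : splitP o
          · have hU : 0 < U i o := by
              rcases hsign o hs with hpos | hneg'
              · exact hpos i hYpos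
              · exact absurd ⟨hs, hneg'⟩ hneg
            have : 0 ≤ 1 - Y i o := by linarith [hYle1 i o]
            simp only [ht_def, hZ1]
            positivity
          · have h1 : Y i o = 1 := hfull o i hYpos hs
            simp [ht_def, hZ1, h1]
      · have hZ0 : Z i o = 0 := by simp [hZ_def, hai]
        by_cases hYpos : 0 < Y i o
        · by_cases hneg : negc o
          · have hU : U i o < 0 := hneg.2 i hYpos
            simp only [ht_def, hZ0]
            nlinarith [hY.1 i o]
          · exact absurd (ha3 o hneg i hYpos (fun h => hai h.symm)) hne
        · have h0 : Y i o = 0 := le_antisymm (not_lt.mp hYpos) (hY.1 i o)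
          simp [ht_def, hZ0, h0]
    have claim1 : ∀ o, -(⨆ o', |U i o'|) ≤ t o := by
      intro o
      have hz : 0 ≤ Z i o ∧ Z i o ≤ 1 := by
        rcases hZ01 i o with h | h <;> simp [h]
      have h1 : |Z i o - Y i o| ≤ 1 := by
        rw [abs_sub_le_iff]
        constructor <;> [linarith [hY.1 i o, hz.1, hz.2]; linarith [hYle1 i o, hz.1, hz.2]]
      have h2 : |t o| ≤ |U i o| := by
        rw [ht_def]
        calc |U i o * (Z i o - Y i o)| = |U i o| * |Z i o - Y i o| := abs_mul _ _
          _ ≤ |U i o| * 1 := by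
              exact mul_le_mul_of_nonneg_left h1 (abs_nonneg _)
          _ = |U i o| := mul_one _
      have := neg_abs_le (t o)
      have := habs o
      linarith
    rw [sub_le_iff_le_add, ← sub_le_iff_le_add']
    rw [show util U Y i - util U Z i = -(util U Z i - util U Y i) by ring, hsum]
    rcases hpi : par (Sum.inl i) with _ | v
    · have : 0 ≤ ∑ o, t o :=
        Finset.sum_nonneg fun o _ => claim0 o (by rw [hpi]; simp)
      linarith
    · rcases v with j | o₀
      · have : 0 ≤ ∑ o, t o :=
          Finset.sum_nonneg fun o _ => claim0 o (by rw [hpi]; simp)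
        linarith
      · have hsum2 : t o₀ + ∑ o ∈ Finset.univ.erase o₀, t o = ∑ o, t o :=
          Finset.add_sum_erase _ _ (Finset.mem_univ o₀)
        have hrest : 0 ≤ ∑ o ∈ Finset.univ.erase o₀, t o := by
          refine Finset.sum_nonneg fun o ho => claim0 o ?_
          rw [hpi]
          intro h
          obtain h2 := Option.some.inj h
          have : o₀ = o := by injection h2
          exact (Finset.mem_erase.mp ho).1 this.symm
        have := claim1 o₀
        linarith
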